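/- Let m, n be positive integers with m ≤ n and gcd(m,n) = 1, and define g : ℤ → {z,y} by g(i) = z if i mod (m+n) is congruent to one of 1, 2, …, m, and g(i) = y otherwise. Then the word w(m,n) = g(1)·g(1+m)·g(1+2m)⋯g(1+(m+n−1)m) in the free group F = ⟨z,y⟩ contains exactly m occurrences of z and exactly n occurrences of y, and w(m,n) is a primitive element of F. -/

import Mathlib

/-- An element of the free group `F = ⟨z, y⟩` (generator `true` = `z`,
`false` = `y`) is *primitive* if it belongs to some generating pair of `F`. -/
def IsPrimitive (w : FreeGroup Bool) : Prop :=
  ∃ w' : FreeGroup Bool, Subgroup.closure {w, w'} = ⊤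

/-- The list of letters of the Osborne–Zieschang word `w(m, n)`:
the `k`-th letter is `g(1 + k·m)`, where `g(i) = z` (encoded `true`) iff
`i mod (m + n)` is congruent to one of `1, …, m`, and `y` (encoded `false`)
otherwise. -/
def ozLetters (m n : ℕ) : List Bool :=
  (List.range (m + n)).map fun k => decide ((1 + k * m) % (m + n) ∈ Finset.Icc 1 m)

/-- The word in `F = ⟨z, y⟩` spelled by a list of letters (`true` ↦ `z`, `false` ↦ `y`). -/
def wordOf (L : List Bool) : FreeGroup Bool :=
  (L.map fun b => FreeGroup.of b).prod

namespace OZAux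

/-- Cleaner form of the letters. -/
def letters (m N : ℕ) : List Bool :=
  (List.range N).map fun k => decide (k * m % N < m)

def sig1 (b : Bool) : List Bool := if b then [true, false] else [false]
def sig2 (b : Bool) : List Bool := if b then [true] else [false, true]

lemma flatMap_congr {α β : Type*} {l : List α} {f g : α → List β}
    (h : ∀ a ∈ l, f a = g a) : l.flatMap f = l.flatMap g := by
  rw [List.flatMap_def, List.flatMap_def, List.map_congr_left h]

/-- Generic: split `range (p N)` into consecutive blocks. -/
lemma range_map_eq_flatMap {α : Type*} (f : ℕ → α) (p : ℕ → ℕ) (hp0 : p 0 = 0)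
    (hmono : ∀ k, p k ≤ p (k + 1)) :
    ∀ N, (List.range (p N)).map f
      = (List.range N).flatMap
          (fun k => (List.range (p (k + 1) - p k)).map (fun t => f (p k + t)))
  | 0 => by simp [hp0]
  | (N + 1) => by
      have h : p (N + 1) = p N + (p (N + 1) - p N) := by
        have := hmono N; omega
      rw [h, List.range_add, List.map_append,
        range_map_eq_flatMap f p hp0 hmono N, List.range_succ,
        List.flatMap_append]
      simp [List.map_map, Function.comp_def]

lemma oz_eq_letters (m n : ℕ) (hm : 0 < m) (hn : 0 < n) :
    ozLetters m n = letters m (m + n) := by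
  unfold ozLetters letters
  apply List.map_congr_left
  intro k _
  have hN : 1 < m + n := by omega
  have hr : k * m % (m + n) < m + n := Nat.mod_lt _ (by omega)
  rw [Nat.add_mod 1 (k * m), Nat.mod_eq_of_lt hN]
  rcases Nat.lt_or_ge (1 + k * m % (m + n)) (m + n) with h | h
  · rw [Nat.mod_eq_of_lt h]
    simp only [Finset.mem_Icc, decide_eq_decide]
    omega
  · have h2 : 1 + k * m % (m + n) = m + n := by omega
    rw [h2, Nat.mod_self]
    simp only [Finset.mem_Icc, decide_eq_decide]
    omega

/-- Euclid step 1: `letters m (N + m) = (letters m N).flatMap sig1` for `0 < m ≤ N`. -/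
lemma lettersA (m N : ℕ) (hm : 0 < m) (hmN : m ≤ N) :
    letters m (N + m) = (letters m N).flatMap sig1 := by
  have hN : 0 < N := lt_of_lt_of_le hm hmN
  set p : ℕ → ℕ := fun k => k + (k * m + (N - m)) / N with hp
  have hp0 : p 0 = 0 := by
    show 0 + (0 * m + (N - m)) / N = 0
    simp [Nat.div_eq_of_lt (show N - m < N by omega)]
  have hmono : ∀ k, p k ≤ p (k + 1) := by
    intro k
    have h1 : k * m + (N - m) ≤ (k + 1) * m + (N - m) :=
      Nat.add_le_add_right (Nat.mul_le_mul_right m (Nat.le_succ k)) _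
    exact Nat.add_le_add (Nat.le_succ k) (Nat.div_le_div_right h1)
  have hpN : p N = N + m := by
    show N + (N * m + (N - m)) / N = N + m
    rw [Nat.mul_add_div hN, Nat.div_eq_of_lt (show N - m < N by omega), Nat.add_zero]
  have key := range_map_eq_flatMap (fun j => decide (j * m % (N + m) < m)) p hp0 hmono N
  rw [hpN] at key
  show (List.range (N + m)).map (fun j => decide (j * m % (N + m) < m)) = _
  rw [key]
  unfold letters
  conv_rhs => rw [List.flatMap_def, List.map_map, ← List.flatMap_def]
  apply flatMap_congr
  intro k hk
  set r := k * m % N with hrdef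
  set q := k * m / N with hqdef
  have hqr : N * q + r = k * m := Nat.div_add_mod _ _
  have hr : r < N := Nat.mod_lt _ hN
  have hT1 : ((k + 1) * m + (N - m)) / N = q + 1 := by
    have e : (k + 1) * m + (N - m) = N * q + (r + N) := by
      have h3 : (k + 1) * m = k * m + m := by ring
      rw [h3, ← hqr]; omega
    rw [e, Nat.mul_add_div hN, Nat.add_div_right _ hN, Nat.div_eq_of_lt hr]
  have hv2 : (k + q + 1) * m % (N + m) = r + m := by
    have e2 : (k + q + 1) * m = (N + m) * q + (r + m) := by
      have h3 : (k + q + 1) * m = k * m + (q * m + m) := by ring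
      rw [h3, ← hqr]; ring
    rw [e2, Nat.mul_add_mod, Nat.mod_eq_of_lt (by omega)]
  rcases Nat.lt_or_ge r m with hcase | hcase
  · -- letter true : block [true, false]
    have hTk : (k * m + (N - m)) / N = q := by
      have e : k * m + (N - m) = N * q + (r + (N - m)) := by
        rw [← hqr]; omega
      rw [e, Nat.mul_add_div hN, Nat.div_eq_of_lt (by omega), Nat.add_zero]
    have hpk : p k = k + q := by
      show k + (k * m + (N - m)) / N = k + q; rw [hTk]
    have hpk1 : p (k + 1) = k + q + 2 := by
      show k + 1 + ((k + 1) * m + (N - m)) / N = k + q + 2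
      rw [hT1]; omega
    have hlen : p (k + 1) - p k = 2 := by omega
    have hv1 : (k + q) * m % (N + m) = r := by
      have e2 : (k + q) * m = (N + m) * q + r := by
        have h3 : (k + q) * m = k * m + q * m := by ring
        rw [h3, ← hqr]; ring
      rw [e2, Nat.mul_add_mod, Nat.mod_eq_of_lt (by omega)]
    rw [hlen, hpk]
    show [decide ((k + q + 0) * m % (N + m) < m), decide ((k + q + 1) * m % (N + m) < m)]
      = sig1 (decide (r < m))
    rw [Nat.add_zero, hv1, hv2]
    have h9 : ¬ (r + m < m) := by omega
    simp [sig1, hcase, h9]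
  · -- letter false : block [false]
    have hTk : (k * m + (N - m)) / N = q + 1 := by
      have e : k * m + (N - m) = N * q + ((r - m) + N) := by
        rw [← hqr]; omega
      rw [e, Nat.mul_add_div hN, Nat.add_div_right _ hN, Nat.div_eq_of_lt (by omega)]
    have hpk : p k = k + q + 1 := by
      show k + (k * m + (N - m)) / N = k + q + 1; rw [hTk]; omega
    have hpk1 : p (k + 1) = k + q + 2 := by
      show k + 1 + ((k + 1) * m + (N - m)) / N = k + q + 2
      rw [hT1]; omega
    have hlen : p (k + 1) - p k = 1 := by omega
    rw [hlen, hpk]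
    show [decide ((k + q + 1 + 0) * m % (N + m) < m)] = sig1 (decide (r < m))
    rw [Nat.add_zero, hv2]
    have h9 : ¬ (r < m) := by omega
    have h10 : ¬ (r + m < m) := by omega
    simp [sig1, h9, h10]

/-- Euclid step 2: `letters (a+n) (a+2n) = (letters a (a+n)).flatMap sig2`. -/
lemma lettersB (a n : ℕ) (ha : 0 < a) (hn : 0 < n) :
    letters (a + n) (a + 2 * n) = (letters a (a + n)).flatMap sig2 := by
  have hN : 0 < a + n := by omega
  set p : ℕ → ℕ := fun k => 2 * k - (k * a + n) / (a + n) with hp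
  have hT : ∀ k, ((k + 1) * a + n) / (a + n) = k * a / (a + n) + 1 := by
    intro k
    set q := k * a / (a + n) with hqdef
    set r := k * a % (a + n) with hrdef
    have hqr : (a + n) * q + r = k * a := Nat.div_add_mod _ _
    have hr : r < a + n := Nat.mod_lt _ hN
    have e : (k + 1) * a + n = (a + n) * q + (r + (a + n)) := by
      have h3 : (k + 1) * a = k * a + a := by ring
      rw [h3, ← hqr]; omega
    rw [e, Nat.mul_add_div hN, Nat.add_div_right _ hN, Nat.div_eq_of_lt hr]
  have hqk : ∀ k, k * a / (a + n) ≤ k := by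
    intro k
    have h1 : (a + n) * (k * a / (a + n)) ≤ (a + n) * k := by
      calc (a + n) * (k * a / (a + n)) ≤ (a + n) * (k * a / (a + n)) + k * a % (a + n) :=
            Nat.le_add_right _ _
        _ = k * a := Nat.div_add_mod _ _
        _ ≤ k * (a + n) := Nat.mul_le_mul_left k (by omega)
        _ = (a + n) * k := Nat.mul_comm _ _
    exact Nat.le_of_mul_le_mul_left h1 hN
  have hp0 : p 0 = 0 := by
    show 2 * 0 - (0 * a + n) / (a + n) = 0
    simp [Nat.div_eq_of_lt (show n < a + n by omega)]
  have hmono : ∀ k, p k ≤ p (k + 1) := by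
    intro k
    show 2 * k - (k * a + n) / (a + n) ≤ 2 * (k + 1) - ((k + 1) * a + n) / (a + n)
    have h1 := hT k
    have h2 : k * a / (a + n) ≤ (k * a + n) / (a + n) :=
      Nat.div_le_div_right (Nat.le_add_right _ _)
    have h3 : (k * a + n) / (a + n) ≤ ((k + 1) * a + n) / (a + n) :=
      Nat.div_le_div_right (by
        have : k * a ≤ (k + 1) * a := Nat.mul_le_mul_right a (Nat.le_succ k)
        omega)
    omega
  have hpN : p (a + n) = a + 2 * n := by
    show 2 * (a + n) - ((a + n) * a + n) / (a + n) = a + 2 * n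
    rw [Nat.mul_add_div hN, Nat.div_eq_of_lt (show n < a + n by omega), Nat.add_zero]
    omega
  have key := range_map_eq_flatMap
    (fun j => decide (j * (a + n) % (a + 2 * n) < a + n)) p hp0 hmono (a + n)
  rw [hpN] at key
  show (List.range (a + 2 * n)).map (fun j => decide (j * (a + n) % (a + 2 * n) < a + n)) = _
  rw [key]
  unfold letters
  conv_rhs => rw [List.flatMap_def, List.map_map, ← List.flatMap_def]
  apply flatMap_congr
  intro k hk
  obtain ⟨q, hqdef⟩ : ∃ q, k * a / (a + n) = q := ⟨_, rfl⟩
  obtain ⟨r, hrdef⟩ : ∃ r, k * a % (a + n) = r := ⟨_, rfl⟩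
  show List.map (fun t => decide ((p k + t) * (a + n) % (a + 2 * n) < a + n))
      (List.range (p (k + 1) - p k)) = sig2 (decide (k * a % (a + n) < a))
  rw [hrdef]
  have hqr : (a + n) * q + r = k * a := by
    rw [← hqdef, ← hrdef]; exact Nat.div_add_mod _ _
  have hr : r < a + n := by rw [← hrdef]; exact Nat.mod_lt _ hN
  have hT1 : ((k + 1) * a + n) / (a + n) = q + 1 := by rw [← hqdef]; exact hT k
  have hq : q ≤ k := by rw [← hqdef]; exact hqk k
  rcases Nat.lt_or_ge r a with hcase | hcase
  · -- letter true : block [true]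
    have hTk : (k * a + n) / (a + n) = q := by
      have e : k * a + n = (a + n) * q + (r + n) := by rw [← hqr]; omega
      rw [e, Nat.mul_add_div hN, Nat.div_eq_of_lt (by omega), Nat.add_zero]
    have hpk : p k = 2 * k - q := by
      show 2 * k - (k * a + n) / (a + n) = _; rw [hTk]
    have hpk1 : p (k + 1) = 2 * k + 1 - q := by
      show 2 * (k + 1) - ((k + 1) * a + n) / (a + n) = _; rw [hT1]; omega
    have hlen : p (k + 1) - p k = 1 := by omega
    have hv1 : p k * (a + n) % (a + 2 * n) = r := by
      have e2 : p k * (a + n) = (a + 2 * n) * k + r := by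
        have h4 : p k + q = 2 * k := by omega
        have h5 : (p k + q) * (a + n) = p k * (a + n) + q * (a + n) := by ring
        have h6 : (2 * k) * (a + n) = (a + 2 * n) * k + (k * a) := by ring
        have h7 : q * (a + n) = (a + n) * q := by ring
        have h8 : (p k + q) * (a + n) = (2 * k) * (a + n) := by rw [h4]
        omega
      rw [e2, Nat.mul_add_mod, Nat.mod_eq_of_lt (by omega)]
    rw [hlen]
    show [decide ((p k + 0) * (a + n) % (a + 2 * n) < a + n)] = sig2 (decide (r < a))
    rw [Nat.add_zero, hv1]
    have h9 : r < a + n := hr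
    simp [sig2, hcase, h9]
  · -- letter false : block [false, true]
    have hk1 : q + 1 ≤ k := by
      rcases Nat.lt_or_ge q k with h | h
      · omega
      · exfalso
        have hqe : q = k := le_antisymm hq h
        rw [hqe] at hqr
        have h2 : k * a ≤ (a + n) * k := by
          calc k * a ≤ k * (a + n) := Nat.mul_le_mul_left k (by omega)
            _ = (a + n) * k := Nat.mul_comm _ _
        omega
    have hTk : (k * a + n) / (a + n) = q + 1 := by
      have e : k * a + n = (a + n) * q + ((r - a) + (a + n)) := by rw [← hqr]; omega
      rw [e, Nat.mul_add_div hN, Nat.add_div_right _ hN, Nat.div_eq_of_lt (by omega)]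
    have hpk : p k = 2 * k - (q + 1) := by
      show 2 * k - (k * a + n) / (a + n) = _; rw [hTk]
    have hpk1 : p (k + 1) = 2 * k + 1 - q := by
      show 2 * (k + 1) - ((k + 1) * a + n) / (a + n) = _; rw [hT1]; omega
    have hlen : p (k + 1) - p k = 2 := by omega
    have e2 : p k * (a + n) = (a + 2 * n) * (k - 1) + (r + n) := by
      have h4 : p k + q + 1 = 2 * k := by omega
      have h5 : (p k + q + 1) * (a + n) = p k * (a + n) + q * (a + n) + (a + n) := by ring
      have h6 : (2 * k) * (a + n) = (a + 2 * n) * k + (k * a) := by ring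
      have h7 : q * (a + n) = (a + n) * q := by ring
      have h8 : (p k + q + 1) * (a + n) = (2 * k) * (a + n) := by rw [h4]
      have h10 : (a + 2 * n) * k = (a + 2 * n) * (k - 1) + (a + 2 * n) := by
        have h11 : k - 1 + 1 = k := by omega
        calc (a + 2 * n) * k = (a + 2 * n) * (k - 1 + 1) := by rw [h11]
          _ = (a + 2 * n) * (k - 1) + (a + 2 * n) := by ring
      omega
    have hv1 : p k * (a + n) % (a + 2 * n) = r + n := by
      rw [e2, Nat.mul_add_mod, Nat.mod_eq_of_lt (by omega)]
    have hv2 : (p k + 1) * (a + n) % (a + 2 * n) = r := by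
      have e3 : (p k + 1) * (a + n) = (a + 2 * n) * k + r := by
        have h5 : (p k + 1) * (a + n) = p k * (a + n) + (a + n) := by ring
        have h10 : (a + 2 * n) * k = (a + 2 * n) * (k - 1) + (a + 2 * n) := by
          have h11 : k - 1 + 1 = k := by omega
          calc (a + 2 * n) * k = (a + 2 * n) * (k - 1 + 1) := by rw [h11]
            _ = (a + 2 * n) * (k - 1) + (a + 2 * n) := by ring
        omega
      rw [e3, Nat.mul_add_mod, Nat.mod_eq_of_lt (by omega)]
    rw [hlen]
    show [decide ((p k + 0) * (a + n) % (a + 2 * n) < a + n),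
          decide ((p k + 1) * (a + n) % (a + 2 * n) < a + n)] = sig2 (decide (r < a))
    rw [Nat.add_zero, hv1, hv2]
    have h9 : ¬ (r + n < a + n) := by omega
    have h12 : ¬ (r < a) := by omega
    simp [sig2, h9, h12, hr]

/- counts -/
lemma count_sig1 (L : List Bool) :
    (L.flatMap sig1).count true = L.count true ∧
    (L.flatMap sig1).count false = L.count false + L.count true := by
  induction L with
  | nil => simp
  | cons b L ih =>
    obtain ⟨ih1, ih2⟩ := ih
    have htf : (true : Bool) ≠ false := by decide
    have hft : (false : Bool) ≠ true := by decide
    cases b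
    · show ((false :: L.flatMap sig1).count true = _) ∧
        ((false :: L.flatMap sig1).count false = _)
      constructor
      · rw [List.count_cons_of_ne hft, List.count_cons_of_ne hft, ih1]
      · rw [List.count_cons_self, List.count_cons_self, List.count_cons_of_ne hft, ih2]
        omega
    · show ((true :: false :: L.flatMap sig1).count true = _) ∧
        ((true :: false :: L.flatMap sig1).count false = _)
      constructor
      · rw [List.count_cons_self, List.count_cons_of_ne hft, List.count_cons_self, ih1]
      · rw [List.count_cons_of_ne htf, List.count_cons_self, List.count_cons_of_ne htf,
          List.count_cons_self, ih2]
        omega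

lemma count_sig2 (L : List Bool) :
    (L.flatMap sig2).count true = L.count true + L.count false ∧
    (L.flatMap sig2).count false = L.count false := by
  induction L with
  | nil => simp
  | cons b L ih =>
    obtain ⟨ih1, ih2⟩ := ih
    have htf : (true : Bool) ≠ false := by decide
    have hft : (false : Bool) ≠ true := by decide
    cases b
    · show ((false :: true :: L.flatMap sig2).count true = _) ∧
        ((false :: true :: L.flatMap sig2).count false = _)
      constructor
      · rw [List.count_cons_of_ne hft, List.count_cons_self, List.count_cons_of_ne hft,
          List.count_cons_self, ih1]
        omega
      · rw [List.count_cons_self, List.count_cons_of_ne htf, List.count_cons_self, ih2]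
    · show ((true :: L.flatMap sig2).count true = _) ∧
        ((true :: L.flatMap sig2).count false = _)
      constructor
      · rw [List.count_cons_self, List.count_cons_self, List.count_cons_of_ne htf, ih1]
        omega
      · rw [List.count_cons_of_ne htf, List.count_cons_of_ne htf, ih2]

/- wordOf and homomorphisms -/
lemma wordOf_cons (b : Bool) (L : List Bool) :
    wordOf (b :: L) = FreeGroup.of b * wordOf L := by
  simp [wordOf]

lemma wordOf_append (L1 L2 : List Bool) :
    wordOf (L1 ++ L2) = wordOf L1 * wordOf L2 := by
  simp [wordOf]

lemma wordOf_flatMap (σ : Bool → List Bool) (g : Bool → FreeGroup Bool)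
    (hg : ∀ b, wordOf (σ b) = g b) (L : List Bool) :
    wordOf (L.flatMap σ) = FreeGroup.lift g (wordOf L) := by
  induction L with
  | nil => simp [wordOf]
  | cons b L ih =>
    rw [List.flatMap_cons, wordOf_append, ih, wordOf_cons, map_mul,
      FreeGroup.lift_apply_of, hg]

lemma eq_top_of_gens (H : Subgroup (FreeGroup Bool))
    (h : ∀ b, FreeGroup.of b ∈ H) : H = ⊤ := by
  rw [eq_top_iff]
  intro x _
  exact FreeGroup.induction_on (C := fun w => w ∈ H) x (one_mem H) h
    (fun b hb => inv_mem hb) (fun u v hu hv => mul_mem hu hv)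

lemma lift_surj (g : Bool → FreeGroup Bool)
    (h : ∀ b, FreeGroup.of b ∈ (FreeGroup.lift g).range) :
    Function.Surjective (FreeGroup.lift g) := by
  rw [← MonoidHom.range_eq_top]
  exact eq_top_of_gens _ h

lemma isPrimitive_map (φ : FreeGroup Bool →* FreeGroup Bool)
    (hφ : Function.Surjective φ) {w : FreeGroup Bool} :
    IsPrimitive w → IsPrimitive (φ w) := by
  rintro ⟨w', hw⟩
  refine ⟨φ w', ?_⟩
  have h1 : ({φ w, φ w'} : Set (FreeGroup Bool)) = φ '' {w, w'} :=
    (Set.image_pair φ w w').symm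
  rw [h1, ← MonoidHom.map_closure, hw, ← MonoidHom.range_eq_map,
    MonoidHom.range_eq_top]
  exact hφ

/-- the two substitution endomorphisms -/
def g1 (b : Bool) : FreeGroup Bool :=
  if b then FreeGroup.of true * FreeGroup.of false else FreeGroup.of false

def g2 (b : Bool) : FreeGroup Bool :=
  if b then FreeGroup.of true else FreeGroup.of false * FreeGroup.of true

lemma hg1 : ∀ b, wordOf (sig1 b) = g1 b := by
  intro b; cases b <;> simp [sig1, g1, wordOf]

lemma hg2 : ∀ b, wordOf (sig2 b) = g2 b := by
  intro b; cases b <;> simp [sig2, g2, wordOf]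

lemma surj1 : Function.Surjective (FreeGroup.lift g1) := by
  apply lift_surj
  intro b
  cases b
  · exact ⟨FreeGroup.of false, by simp [g1]⟩
  · refine ⟨FreeGroup.of true * (FreeGroup.of false)⁻¹, ?_⟩
    simp [g1]
  
lemma surj2 : Function.Surjective (FreeGroup.lift g2) := by
  apply lift_surj
  intro b
  cases b
  · refine ⟨FreeGroup.of false * (FreeGroup.of true)⁻¹, ?_⟩
    simp [g2]
  · exact ⟨FreeGroup.of true, by simp [g2]⟩

lemma prim_base : IsPrimitive (wordOf [true, false]) := by
  refine ⟨FreeGroup.of false, eq_top_of_gens _ ?_⟩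
  intro b
  have hmemw : wordOf [true, false] ∈
      Subgroup.closure ({wordOf [true, false], FreeGroup.of false} : Set (FreeGroup Bool)) :=
    Subgroup.subset_closure (by left; rfl)
  have hmemy : FreeGroup.of false ∈
      Subgroup.closure ({wordOf [true, false], FreeGroup.of false} : Set (FreeGroup Bool)) :=
    Subgroup.subset_closure (by right; rfl)
  cases b
  · exact hmemy
  · have := mul_mem hmemw (inv_mem hmemy)
    have hw : wordOf [true, false] = FreeGroup.of true * FreeGroup.of false := by
      simp [wordOf]
    rw [hw, mul_assoc, mul_inv_cancel, mul_one] at this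
    exact this

lemma main : ∀ N m n : ℕ, m + n = N → 0 < m → 0 < n → Nat.Coprime m n →
    (letters m (m + n)).count true = m ∧
    (letters m (m + n)).count false = n ∧
    IsPrimitive (wordOf (letters m (m + n))) := by
  intro N
  induction N using Nat.strong_induction_on with
  | _ N IH =>
    intro m n hS hm hn hcop
    rcases lt_trichotomy m n with h | h | h
    · -- m < n : reduce to (m, n - m)
      have hcop' : Nat.Coprime m (n - m) := by
        unfold Nat.Coprime at *
        rw [Nat.gcd_sub_self_right h.le]
        exact hcop
      have hsmall := IH n (by omega) m (n - m) (by omega) hm (by omega) hcop'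
      rw [show m + (n - m) = n by omega] at hsmall
      obtain ⟨hc1, hc2, hprim⟩ := hsmall
      have hA : letters m (m + n) = (letters m n).flatMap sig1 := by
        rw [show m + n = n + m by omega]
        exact lettersA m n hm h.le
      rw [hA]
      refine ⟨?_, ?_, ?_⟩
      · rw [(count_sig1 _).1, hc1]
      · rw [(count_sig1 _).2, hc1, hc2]; omega
      · rw [wordOf_flatMap sig1 g1 hg1]
        exact isPrimitive_map _ surj1 hprim
    · -- m = n : coprime forces m = n = 1
      subst h
      have hm1 : m = 1 := by
        simpa [Nat.Coprime, Nat.gcd_self] using hcop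
      rw [hm1]
      have hL : letters 1 (1 + 1) = [true, false] := by decide
      rw [hL]
      exact ⟨by decide, by decide, prim_base⟩
    · -- n < m : reduce to (m - n, n)
      have hcop' : Nat.Coprime (m - n) n := by
        unfold Nat.Coprime at *
        rw [Nat.gcd_sub_self_left h.le]
        exact hcop
      have hsmall := IH m (by omega) (m - n) n (by omega) (by omega) hn hcop'
      obtain ⟨hc1, hc2, hprim⟩ := hsmall
      rw [show m - n + n = m by omega] at hc1 hc2 hprim
      have hB : letters m (m + n) = (letters (m - n) m).flatMap sig2 := by
        have h2 := lettersB (m - n) n (by omega) hn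
        rw [show m - n + n = m by omega, show m - n + 2 * n = m + n by omega] at h2
        exact h2
      rw [hB]
      refine ⟨?_, ?_, ?_⟩
      · rw [(count_sig2 _).1, hc1, hc2]; omega
      · rw [(count_sig2 _).2, hc2]
      · rw [wordOf_flatMap sig2 g2 hg2]
        exact isPrimitive_map _ surj2 hprim

end OZAux

/-- For coprime `0 < m ≤ n`, the word `w(m,n) = g(1)g(1+m)⋯g(1+(m+n−1)m)` contains
exactly `m` occurrences of `z` and `n` occurrences of `y`, and it is a primitive
element of the free group `F = ⟨z, y⟩`. -/
theorem ozWord_count_and_primitive (m n : ℕ) (hm : 0 < m) (hmn : m ≤ n)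
    (hcop : Nat.Coprime m n) :
    (ozLetters m n).count true = m ∧
    (ozLetters m n).count false = n ∧
    IsPrimitive (wordOf (ozLetters m n)) := by
  have hn : 0 < n := lt_of_lt_of_le hm hmn
  rw [OZAux.oz_eq_letters m n hm hn]
  exact OZAux.main (m + n) m n rfl hm hn hcop
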